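/- Let F be an m_F × n complex matrix, G an m_G × n complex matrix, and Z_N an invertible n × n complex matrix. Set F_N := F·Z_N and G_N := G·Z_N, and assume F_Nᴴ F_N and G_Nᴴ G_N are diagonal matrices and that every column of F_N and every column of G_N is nonzero. For each j let σ̃_F(j) and σ̃_G(j) be the Euclidean norms of the j-th columns of F_N and G_N respectively, and let θ(j) := 1/√(σ̃_F(j)² + σ̃_G(j)²). Define U := F_N·diag(σ̃_F)⁻¹, V := G_N·diag(σ̃_G)⁻¹, Z := Z_N·diag(θ), Σ_F := diag(j ↦ σ̃_F(j)·θ(j)), and Σ_G := diag(j ↦ σ̃_G(j)·θ(j)). Then Uᴴ U = Iₙ, Vᴴ V = Iₙ, F·Z = U·Σ_F, G·Z = V·Σ_G, and Σ_F² + Σ_G² = Iₙ. -/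

import Mathlib

open Matrix

lemma aux_pos {m n : ℕ} (A : Matrix (Fin m) (Fin n) ℂ)
    (hcol : ∀ j, ∃ i, A i j ≠ 0) (σ : Fin n → ℝ)
    (hσ : ∀ j, σ j = Real.sqrt (∑ i, ‖A i j‖ ^ 2)) :
    ∀ j, 0 < σ j := by
  intro j
  rw [hσ]
  apply Real.sqrt_pos.2
  obtain ⟨i, hi⟩ := hcol j
  exact Finset.sum_pos' (fun i _ => sq_nonneg _)
    ⟨i, Finset.mem_univ i, pow_pos (norm_pos_iff.mpr hi) 2⟩

lemma aux_gram {m n : ℕ} (A : Matrix (Fin m) (Fin n) ℂ)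
    (hdiag : (Aᴴ * A).IsDiag) (σ : Fin n → ℝ)
    (hσ : ∀ j, σ j = Real.sqrt (∑ i, ‖A i j‖ ^ 2)) :
    Aᴴ * A = Matrix.diagonal (fun j => ((σ j : ℂ)) ^ 2) := by
  ext j k
  by_cases h : j = k
  · subst h
    rw [Matrix.diagonal_apply_eq]
    have h1 : (Aᴴ * A) j j = ∑ i, ((‖A i j‖ ^ 2 : ℝ) : ℂ) := by
      simp only [Matrix.mul_apply, Matrix.conjTranspose_apply]
      congr 1
      ext i
      rw [Complex.star_def, RCLike.conj_mul]
      push_cast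
      rfl
    have h2 : σ j ^ 2 = ∑ i, ‖A i j‖ ^ 2 := by
      rw [hσ, Real.sq_sqrt (Finset.sum_nonneg fun i _ => sq_nonneg _)]
    rw [h1]
    exact_mod_cast congrArg Complex.ofReal h2.symm
  · rw [Matrix.diagonal_apply_ne _ h, hdiag h]

lemma aux_inv {n : ℕ} (v : Fin n → ℂ) (hv : ∀ j, v j ≠ 0) :
    (Matrix.diagonal v)⁻¹ = Matrix.diagonal (fun j => (v j)⁻¹) := by
  apply Matrix.inv_eq_right_inv
  rw [Matrix.diagonal_mul_diagonal,
    show (fun i => v i * (v i)⁻¹) = fun _ => (1 : ℂ) from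
      funext fun i => mul_inv_cancel₀ (hv i), Matrix.diagonal_one]

lemma aux_ortho {m n : ℕ} (A : Matrix (Fin m) (Fin n) ℂ)
    (hdiag : (Aᴴ * A).IsDiag)
    (hcol : ∀ j, ∃ i, A i j ≠ 0) (σ : Fin n → ℝ)
    (hσ : ∀ j, σ j = Real.sqrt (∑ i, ‖A i j‖ ^ 2)) :
    (A * (Matrix.diagonal (fun j => (σ j : ℂ)))⁻¹)ᴴ *
      (A * (Matrix.diagonal (fun j => (σ j : ℂ)))⁻¹) = 1 := by
  have hpos := aux_pos A hcol σ hσ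
  have hne : ∀ j, (σ j : ℂ) ≠ 0 := fun j => Complex.ofReal_ne_zero.2 (hpos j).ne'
  rw [aux_inv _ hne, Matrix.conjTranspose_mul, Matrix.diagonal_conjTranspose,
    Matrix.mul_assoc, ← Matrix.mul_assoc Aᴴ, aux_gram A hdiag σ hσ,
    Matrix.diagonal_mul_diagonal, Matrix.diagonal_mul_diagonal]
  ext j k
  rcases eq_or_ne j k with rfl | h
  · simp only [Matrix.diagonal_apply_eq, Matrix.one_apply_eq, Pi.star_apply,
      star_inv₀, Complex.star_def, Complex.conj_ofReal]
    field_simp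
    exact div_self (hne j)
  · rw [Matrix.diagonal_apply_ne _ h, Matrix.one_apply_ne h]

theorem stmt_7 (mF mG n : ℕ)
    (F : Matrix (Fin mF) (Fin n) ℂ) (G : Matrix (Fin mG) (Fin n) ℂ)
    (ZN : Matrix (Fin n) (Fin n) ℂ) (hZN : IsUnit ZN)
    (FN : Matrix (Fin mF) (Fin n) ℂ) (hFN : FN = F * ZN)
    (GN : Matrix (Fin mG) (Fin n) ℂ) (hGN : GN = G * ZN)
    (hFdiag : (FNᴴ * FN).IsDiag) (hGdiag : (GNᴴ * GN).IsDiag)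
    (hFcol : ∀ j, ∃ i, FN i j ≠ 0) (hGcol : ∀ j, ∃ i, GN i j ≠ 0)
    (σF σG θ : Fin n → ℝ)
    (hσF : ∀ j, σF j = Real.sqrt (∑ i, ‖FN i j‖ ^ 2))
    (hσG : ∀ j, σG j = Real.sqrt (∑ i, ‖GN i j‖ ^ 2))
    (hθ : ∀ j, θ j = 1 / Real.sqrt (σF j ^ 2 + σG j ^ 2))
    (U : Matrix (Fin mF) (Fin n) ℂ)
    (hU : U = FN * (Matrix.diagonal (fun j => (σF j : ℂ)))⁻¹)
    (V : Matrix (Fin mG) (Fin n) ℂ)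
    (hV : V = GN * (Matrix.diagonal (fun j => (σG j : ℂ)))⁻¹)
    (Z : Matrix (Fin n) (Fin n) ℂ)
    (hZ : Z = ZN * Matrix.diagonal (fun j => (θ j : ℂ)))
    (SigmaF SigmaG : Matrix (Fin n) (Fin n) ℂ)
    (hSigmaF : SigmaF = Matrix.diagonal (fun j => ((σF j * θ j : ℝ) : ℂ)))
    (hSigmaG : SigmaG = Matrix.diagonal (fun j => ((σG j * θ j : ℝ) : ℂ))) :
    Uᴴ * U = 1 ∧ Vᴴ * V = 1 ∧ F * Z = U * SigmaF ∧ G * Z = V * SigmaG ∧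
      SigmaF ^ 2 + SigmaG ^ 2 = 1 := by
  have hFpos := aux_pos FN hFcol σF hσF
  have hGpos := aux_pos GN hGcol σG hσG
  have hFne : ∀ j, (σF j : ℂ) ≠ 0 := fun j => Complex.ofReal_ne_zero.2 (hFpos j).ne'
  have hGne : ∀ j, (σG j : ℂ) ≠ 0 := fun j => Complex.ofReal_ne_zero.2 (hGpos j).ne'
  refine ⟨?_, ?_, ?_, ?_, ?_⟩
  · rw [hU]; exact aux_ortho FN hFdiag hFcol σF hσF
  · rw [hV]; exact aux_ortho GN hGdiag hGcol σG hσG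
  · rw [hZ, hU, hSigmaF, ← Matrix.mul_assoc, ← hFN, aux_inv _ hFne,
      Matrix.mul_assoc, Matrix.diagonal_mul_diagonal]
    have hd : (fun i => ((σF i : ℂ))⁻¹ * ((σF i * θ i : ℝ) : ℂ))
        = fun j => ((θ j : ℝ) : ℂ) := by
      funext i
      push_cast
      field_simp
      rw [mul_comm, mul_div_assoc, div_self (hFne i), mul_one]
    rw [hd]
  · rw [hZ, hV, hSigmaG, ← Matrix.mul_assoc, ← hGN, aux_inv _ hGne,
      Matrix.mul_assoc, Matrix.diagonal_mul_diagonal]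
    have hd : (fun i => ((σG i : ℂ))⁻¹ * ((σG i * θ i : ℝ) : ℂ))
        = fun j => ((θ j : ℝ) : ℂ) := by
      funext i
      push_cast
      field_simp
      rw [mul_comm, mul_div_assoc, div_self (hGne i), mul_one]
    rw [hd]
  · rw [hSigmaF, hSigmaG]
    rw [sq, sq, Matrix.diagonal_mul_diagonal, Matrix.diagonal_mul_diagonal,
      Matrix.diagonal_add]
    have key : (fun j => ((σF j * θ j : ℝ) : ℂ) * ((σF j * θ j : ℝ) : ℂ)
        + ((σG j * θ j : ℝ) : ℂ) * ((σG j * θ j : ℝ) : ℂ)) = fun _ => (1 : ℂ) := by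
      funext j
      have h1 := hFpos j
      have h2 := hGpos j
      have hs : (0 : ℝ) < σF j ^ 2 + σG j ^ 2 := by positivity
      have hθj : θ j ^ 2 = (σF j ^ 2 + σG j ^ 2)⁻¹ := by
        rw [hθ, div_pow, one_pow, Real.sq_sqrt hs.le, one_div]
      have hr : (σF j * θ j) * (σF j * θ j) + (σG j * θ j) * (σG j * θ j) = 1 := by
        have h3 : (σF j ^ 2 + σG j ^ 2) * θ j ^ 2 = 1 := by
          rw [hθj]; field_simp
        nlinarith [h3]
      exact_mod_cast congrArg Complex.ofReal hr
    rw [key, Matrix.diagonal_one]
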